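/- Let μ and ν be probability measures on a measurable space Ω, let 0 ≤ a < b < ∞, and let L : Ω → ℝ be a measurable function with a ≤ L(ω) ≤ b for all ω. If μ is absolutely continuous with respect to ν and KL(μ‖ν) < ∞, then ∫ L dμ − ∫ L dν ≤ KL(μ‖ν) + 2·log((e^a + e^b)/2) − a − b. -/

import Mathlib

open MeasureTheory Real Classical

lemma my_sub_one_le_mul_log {t : ℝ} (ht : 0 ≤ t) : t - 1 ≤ t * Real.log t := by
  rcases eq_or_lt_of_le ht with h | h
  · simp [← h]
  · have h1 : Real.log t⁻¹ ≤ t⁻¹ - 1 := Real.log_le_sub_one_of_pos (by positivity)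
    rw [Real.log_inv] at h1
    have h2 : t * (-Real.log t) ≤ t * (t⁻¹ - 1) :=
      mul_le_mul_of_nonneg_left h1 ht
    rw [mul_sub, mul_inv_cancel₀ h.ne'] at h2
    nlinarith

lemma my_gibbs {Ω : Type*} [MeasurableSpace Ω] (μ ν : Measure Ω)
    [IsProbabilityMeasure μ] [IsProbabilityMeasure ν]
    (hac : μ ≪ ν) (h_int : Integrable (llr μ ν) μ) :
    0 ≤ ∫ x, llr μ ν x ∂μ := by
  have hre : ∫ x, llr μ ν x ∂μ
      = ∫ x, (μ.rnDeriv ν x).toReal • llr μ ν x ∂ν :=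
    (MeasureTheory.integral_rnDeriv_smul hac).symm
  have h_int2 : Integrable (fun x ↦ (μ.rnDeriv ν x).toReal • llr μ ν x) ν :=
    (MeasureTheory.integrable_rnDeriv_smul_iff hac).mpr h_int
  have h_int1 : Integrable (fun x ↦ (μ.rnDeriv ν x).toReal - 1) ν :=
    (Measure.integrable_toReal_rnDeriv).sub (integrable_const 1)
  have hmono : ∫ x, ((μ.rnDeriv ν x).toReal - 1) ∂ν
      ≤ ∫ x, (μ.rnDeriv ν x).toReal • llr μ ν x ∂ν := by
    refine integral_mono h_int1 h_int2 fun x ↦ ?_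
    exact my_sub_one_le_mul_log ENNReal.toReal_nonneg
  have hzero : ∫ x, ((μ.rnDeriv ν x).toReal - 1) ∂ν = 0 := by
    rw [integral_sub Measure.integrable_toReal_rnDeriv (integrable_const 1),
      Measure.integral_toReal_rnDeriv hac]
    simp
  rw [hre]
  rw [hzero] at hmono
  exact hmono

lemma my_analytic {a b p q : ℝ} (hp : 0 ≤ p) (hq : 0 ≤ q) (hpq : p + q = 1) :
    Real.log (p * Real.exp a + q * Real.exp b) - (p * a + q * b) ≤
      2 * Real.log ((Real.exp a + Real.exp b) / 2) - a - b := by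
  have hu0 : 0 < Real.exp a := Real.exp_pos a
  have hv0 : 0 < Real.exp b := Real.exp_pos b
  set u := Real.exp a with hu
  set v := Real.exp b with hv
  have hpos : ∀ x y : ℝ, 0 ≤ x → 0 ≤ y → x + y = 1 → 0 < x * u + y * v := by
    intro x y hx hy hxy
    rcases eq_or_lt_of_le hx with h | h
    · have hy1 : y = 1 := by linarith
      rw [← h, hy1]; simpa using hv0
    · have h1 : 0 < x * u := mul_pos h hu0
      have h2 : 0 ≤ y * v := mul_nonneg hy hv0.le
      linarith
  have hX0 : 0 < p * u + q * v := hpos p q hp hq hpq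
  have hY0 : 0 < q * u + p * v := hpos q p hq hp (by linarith)
  have hgm : u ^ q * v ^ p ≤ q * u + p * v :=
    Real.geom_mean_le_arith_mean2_weighted hq hp hu0.le hv0.le (by linarith)
  have hrw : u ^ q * v ^ p = Real.exp (q * a + p * b) := by
    rw [hu, hv, ← Real.exp_mul, ← Real.exp_mul, ← Real.exp_add]
    ring_nf
  have hXY : (p * u + q * v) + (q * u + p * v) = u + v := by
    linear_combination (u + v) * hpq
  have hprod : ∀ X Y : ℝ, X + Y = u + v → X * Y ≤ ((u + v) / 2) ^ 2 := by
    intro X Y h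
    nlinarith [sq_nonneg (X - Y)]
  have key : (p * u + q * v) * Real.exp (q * a + p * b) ≤ ((u + v) / 2) ^ 2 := by
    rw [← hrw]
    calc (p * u + q * v) * (u ^ q * v ^ p) ≤ (p * u + q * v) * (q * u + p * v) :=
          mul_le_mul_of_nonneg_left hgm hX0.le
      _ ≤ _ := hprod _ _ hXY
  have hlog := Real.log_le_log (by positivity) key
  rw [Real.log_mul hX0.ne' (Real.exp_ne_zero _), Real.log_exp, Real.log_pow] at hlog
  push_cast at hlog
  have hq' : q * a + p * b = a + b - (p * a + q * b) := by
    linear_combination (a + b) * hpq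
  linarith

/-- The Kullback--Leibler divergence `KL(μ‖ν) = ∫ log (dμ/dν) dμ`, taking the value `⊤`
unless `μ ≪ ν` and the log-likelihood ratio is integrable. -/
noncomputable def klDiv {Ω : Type*} [MeasurableSpace Ω] (μ ν : Measure Ω) : EReal :=
  if μ ≪ ν ∧ Integrable (llr μ ν) μ then ((∫ ω, llr μ ν ω ∂μ : ℝ) : EReal) else ⊤

/-- **Theorem 1 of the paper.** For probability measures `μ ≪ ν` with finite KL divergence and
a measurable loss `L` with values in `[a, b]`, `0 ≤ a < b`, the difference of the expected
losses is bounded by `KL(μ‖ν) + C` with `C = 2 log((eᵃ + eᵇ)/2) − a − b`. -/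
theorem expected_loss_diff_le_klDiv_add_const
    {Ω : Type*} [MeasurableSpace Ω] (μ ν : Measure Ω)
    [IsProbabilityMeasure μ] [IsProbabilityMeasure ν]
    (a b : ℝ) (ha : 0 ≤ a) (hab : a < b)
    (L : Ω → ℝ) (hL : Measurable L) (hLa : ∀ ω, a ≤ L ω) (hLb : ∀ ω, L ω ≤ b)
    (hac : μ ≪ ν) (hfin : klDiv μ ν < ⊤) :
    ∫ ω, L ω ∂μ - ∫ ω, L ω ∂ν ≤
      (klDiv μ ν).toReal + 2 * Real.log ((Real.exp a + Real.exp b) / 2) - a - b := by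
  have hba : 0 < b - a := sub_pos.2 hab
  -- extract integrability of llr and the value of klDiv
  have hcond : μ ≪ ν ∧ Integrable (llr μ ν) μ := by
    by_contra h
    rw [klDiv, if_neg h] at hfin
    exact lt_irrefl _ hfin
  have h_int : Integrable (llr μ ν) μ := hcond.2
  have hkl : (klDiv μ ν).toReal = ∫ ω, llr μ ν ω ∂μ := by
    rw [klDiv, if_pos hcond]
    simp
  -- integrability of L and exp ∘ L
  have hLbd : ∀ ω, ‖L ω‖ ≤ b := fun ω ↦ by
    rw [Real.norm_eq_abs, abs_le]
    exact ⟨by linarith [hLa ω], hLb ω⟩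
  have hLμ : Integrable L μ :=
    Integrable.mono' (integrable_const b) hL.aestronglyMeasurable (ae_of_all _ hLbd)
  have hLν : Integrable L ν :=
    Integrable.mono' (integrable_const b) hL.aestronglyMeasurable (ae_of_all _ hLbd)
  have hexpν : Integrable (fun ω ↦ Real.exp (L ω)) ν := by
    refine Integrable.mono' (integrable_const (Real.exp b))
      (hL.exp).aestronglyMeasurable (ae_of_all _ fun ω ↦ ?_)
    rw [Real.norm_eq_abs, abs_of_pos (Real.exp_pos _)]
    exact Real.exp_le_exp.2 (hLb ω)
  -- the tilted measure
  haveI : NeZero ν := ⟨IsProbabilityMeasure.ne_zero ν⟩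
  haveI : IsProbabilityMeasure (ν.tilted L) := isProbabilityMeasure_tilted hexpν
  have hac' : μ ≪ ν.tilted L := hac.trans (absolutelyContinuous_tilted hexpν)
  have h_int' : Integrable (llr μ (ν.tilted L)) μ :=
    integrable_llr_tilted_right hac hLμ h_int hexpν
  have hDV : 0 ≤ ∫ ω, llr μ (ν.tilted L) ω ∂μ := my_gibbs μ _ hac' h_int'
  have hEq : ∫ ω, llr μ (ν.tilted L) ω ∂μ
      = ∫ ω, llr μ ν ω ∂μ - ∫ ω, L ω ∂μ + Real.log (∫ ω, Real.exp (L ω) ∂ν) :=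
    integral_llr_tilted_right hac hLμ hexpν h_int
  -- Donsker-Varadhan step:
  have hDV2 : ∫ ω, L ω ∂μ ≤ ∫ ω, llr μ ν ω ∂μ + Real.log (∫ ω, Real.exp (L ω) ∂ν) := by
    rw [hEq] at hDV; linarith
  -- bounds on the mean
  set m := ∫ ω, L ω ∂ν with hm
  have hma : a ≤ m := by
    have := integral_mono (integrable_const a) hLν hLa
    simpa using this
  have hmb : m ≤ b := by
    have := integral_mono hLν (integrable_const b) hLb
    simpa using this
  -- convexity bound on ∫ exp L dν
  set c₁ : ℝ := (b * Real.exp a - a * Real.exp b) / (b - a) with hc₁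
  set c₂ : ℝ := (Real.exp b - Real.exp a) / (b - a) with hc₂
  have hptw : ∀ ω, Real.exp (L ω) ≤ c₁ + c₂ * L ω := by
    intro ω
    have hp : 0 ≤ (b - L ω) / (b - a) := by
      apply div_nonneg _ hba.le; linarith [hLb ω]
    have hq : 0 ≤ (L ω - a) / (b - a) := by
      apply div_nonneg _ hba.le; linarith [hLa ω]
    have hpq : (b - L ω) / (b - a) + (L ω - a) / (b - a) = 1 := by
      field_simp; ring
    have hcomb : ((b - L ω) / (b - a)) • a + ((L ω - a) / (b - a)) • b = L ω := by
      simp only [smul_eq_mul]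
      field_simp
      ring
    have := convexOn_exp.2 (Set.mem_univ a) (Set.mem_univ b) hp hq hpq
    rw [hcomb] at this
    simp only [smul_eq_mul] at this
    calc Real.exp (L ω) ≤ (b - L ω) / (b - a) * Real.exp a + (L ω - a) / (b - a) * Real.exp b :=
          this
      _ = c₁ + c₂ * L ω := by rw [hc₁, hc₂]; field_simp; ring
  have hintle : ∫ ω, Real.exp (L ω) ∂ν ≤ c₁ + c₂ * m := by
    have h1 : Integrable (fun ω ↦ c₁ + c₂ * L ω) ν :=
      (integrable_const c₁).add (hLν.const_mul c₂)
    have := integral_mono hexpν h1 hptw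
    calc ∫ ω, Real.exp (L ω) ∂ν ≤ ∫ ω, (c₁ + c₂ * L ω) ∂ν := this
      _ = c₁ + c₂ * m := by
          rw [integral_add (integrable_const c₁) (hLν.const_mul c₂),
            integral_const, integral_const_mul]
          simp [hm]
  -- rewrite c₁ + c₂ m as convex combination with weights p q
  set p : ℝ := (b - m) / (b - a) with hp'
  set q : ℝ := (m - a) / (b - a) with hq'
  have hp0 : 0 ≤ p := div_nonneg (by linarith) hba.le
  have hq0 : 0 ≤ q := div_nonneg (by linarith) hba.le
  have hpq1 : p + q = 1 := by rw [hp', hq']; field_simp; ring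
  have hcm : c₁ + c₂ * m = p * Real.exp a + q * Real.exp b := by
    rw [hc₁, hc₂, hp', hq']; field_simp; ring
  have hm_eq : p * a + q * b = m := by
    rw [hp', hq']; field_simp; ring
  rw [hcm] at hintle
  have hlogle : Real.log (∫ ω, Real.exp (L ω) ∂ν)
      ≤ Real.log (p * Real.exp a + q * Real.exp b) :=
    Real.log_le_log (integral_exp_pos hexpν) hintle
  have hana := my_analytic (a := a) (b := b) hp0 hq0 hpq1
  rw [hm_eq] at hana
  rw [hkl]
  linarith
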